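/- arXiv:1911.00865 — 2 statements merged into one kernel-verified Lean document; each statement's English description precedes it below -/
import Mathlib

section
/- (Proposition 2.) Fix t ≥ 0, ε > 0 and θ ∈ ℝ^p with ‖θ* − θ‖ ≥ ε. Then there exists j ∈ {t+1, …, t+N_u} such that Pr(θ ∉ Δ_j) ≥ p_w(ε·√(β/N_u)). -/
open Matrix MeasureTheory ProbabilityTheory
open scoped RealInnerProductSpace

/-- Proposition 2: under tight disturbance bounds and persistence of
excitation, for any `θ` with `‖θ* − θ‖ ≥ ε` there is `j ∈ {t+1,…,t+N_u}` such that
`Pr(θ ∉ Δ_j) ≥ p_w(ε √(β/N_u))`. -/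
theorem stmt3 (n p : ℕ) (hn : 1 ≤ n) (hp : 1 ≤ p)
    (Ω : Type) [MeasurableSpace Ω] (P : Measure Ω) [IsProbabilityMeasure P]
    (W : Set (EuclideanSpace ℝ (Fin n))) (hWne : W.Nonempty) (hWcomp : IsCompact W)
    (hWconv : Convex ℝ W)
    (w : ℕ → Ω → EuclideanSpace ℝ (Fin n)) (hwW : ∀ t ω, w t ω ∈ W)
    (pw : ℝ → ℝ) (hpw01 : ∀ ε : ℝ, 0 < ε → 0 < pw ε ∧ pw ε ≤ 1)
    (hpw : ∀ w0 ∈ frontier W, ∀ ε : ℝ, 0 < ε → ∀ t : ℕ,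
      ENNReal.ofReal (pw ε) ≤ P {ω | ‖w t ω - w0‖ < ε})
    (θs : EuclideanSpace ℝ (Fin p)) (D : ℕ → Matrix (Fin n) (Fin p) ℝ)
    (τ β : ℝ) (hτ : 0 < τ) (hβ : 0 < β) (Nu : ℕ) (hNu : 1 ≤ Nu)
    (hDbdd : ∀ t : ℕ, ∀ v : EuclideanSpace ℝ (Fin p), ‖toEuclideanLin (D t) v‖ ≤ τ * ‖v‖)
    (hPE : ∀ t : ℕ, Matrix.PosSemidef
      ((∑ j ∈ Finset.range Nu, (D (t + j))ᵀ * D (t + j)) - β • (1 : Matrix (Fin p) (Fin p) ℝ)))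
    (Δ : ℕ → Ω → Set (EuclideanSpace ℝ (Fin p)))
    (hΔ : ∀ t ω, Δ (t + 1) ω = {θ | toEuclideanLin (D t) (θs - θ) + w t ω ∈ W})
    (t : ℕ) (ε : ℝ) (hε : 0 < ε)
    (θ : EuclideanSpace ℝ (Fin p)) (hθ : ε ≤ ‖θs - θ‖) :
    ∃ j ∈ Finset.Icc (t + 1) (t + Nu),
      ENNReal.ofReal (pw (ε * Real.sqrt (β / Nu))) ≤ P {ω | θ ∉ Δ j ω} := by
  classical
  have hNuR : (0:ℝ) < (Nu:ℝ) := by exact_mod_cast hNu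
  set v : EuclideanSpace ℝ (Fin p) := θs - θ with hv
  set u : Fin p → ℝ := (WithLp.equiv 2 (Fin p → ℝ)) v with hu
  -- norms of images as dot products
  have hnormsq : ∀ (k : ℕ) (x : EuclideanSpace ℝ (Fin k)),
      ‖x‖ ^ 2 = (WithLp.equiv 2 (Fin k → ℝ)) x ⬝ᵥ (WithLp.equiv 2 (Fin k → ℝ)) x := by
    intro k x
    rw [EuclideanSpace.real_norm_sq_eq]
    simp [dotProduct, sq]
  -- quadratic form bound from PE
  have hquad := (hPE t).dotProduct_mulVec_nonneg u
  have hstar : star u = u := rfl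
  rw [hstar, Matrix.sub_mulVec, dotProduct_sub, sub_nonneg, Matrix.smul_mulVec,
      Matrix.one_mulVec, dotProduct_smul, smul_eq_mul] at hquad
  have hsum : u ⬝ᵥ ((∑ j ∈ Finset.range Nu, (D (t + j))ᵀ * D (t + j)) *ᵥ u)
      = ∑ j ∈ Finset.range Nu, (D (t + j) *ᵥ u) ⬝ᵥ (D (t + j) *ᵥ u) := by
    have hmv : (∑ j ∈ Finset.range Nu, (D (t + j))ᵀ * D (t + j)) *ᵥ u
        = ∑ j ∈ Finset.range Nu, ((D (t + j))ᵀ * D (t + j)) *ᵥ u := by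
      funext i
      simp only [Matrix.mulVec, dotProduct, Matrix.sum_apply, Finset.sum_apply,
        Finset.sum_mul]
      rw [Finset.sum_comm]
    rw [hmv]
    simp only [dotProduct, Finset.sum_apply, Finset.mul_sum]
    rw [Finset.sum_comm]
    refine Finset.sum_congr rfl fun j _ => ?_
    show u ⬝ᵥ (((D (t + j))ᵀ * D (t + j)) *ᵥ u) = _
    rw [← Matrix.mulVec_mulVec, Matrix.dotProduct_mulVec, Matrix.vecMul_transpose]
    rfl
  rw [hsum] at hquad
  -- pigeonhole: some summand is at least β * (u ⬝ᵥ u) / Nu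
  obtain ⟨j, hjmem, hj⟩ : ∃ j ∈ Finset.range Nu,
      β * (u ⬝ᵥ u) / Nu ≤ (D (t + j) *ᵥ u) ⬝ᵥ (D (t + j) *ᵥ u) := by
    by_contra h
    push_neg at h
    have hlt : ∑ j ∈ Finset.range Nu, (D (t + j) *ᵥ u) ⬝ᵥ (D (t + j) *ᵥ u)
        < ∑ _j ∈ Finset.range Nu, β * (u ⬝ᵥ u) / Nu := by
      refine Finset.sum_lt_sum_of_nonempty ?_ h
      exact Finset.nonempty_range_iff.mpr (by omega)
    rw [Finset.sum_const, Finset.card_range, nsmul_eq_mul,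
        mul_div_cancel₀ _ (ne_of_gt hNuR)] at hlt
    linarith
  have hjNu : j < Nu := Finset.mem_range.mp hjmem
  set d : EuclideanSpace ℝ (Fin n) := toEuclideanLin (D (t + j)) v with hd
  set δ : ℝ := ε * Real.sqrt (β / Nu) with hδ
  have hβNu : (0:ℝ) < β / Nu := div_pos hβ hNuR
  have hδpos : 0 < δ := mul_pos hε (Real.sqrt_pos.mpr hβNu)
  -- δ ≤ ‖d‖
  have hdu : (WithLp.equiv 2 (Fin n → ℝ)) d = D (t + j) *ᵥ u := rfl
  have hdsq : δ ^ 2 ≤ ‖d‖ ^ 2 := by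
    have h1 : ‖d‖ ^ 2 = (D (t + j) *ᵥ u) ⬝ᵥ (D (t + j) *ᵥ u) := by
      rw [hnormsq n d, hdu]
    have h2 : ‖v‖ ^ 2 = u ⬝ᵥ u := hnormsq p v
    have h3 : δ ^ 2 = ε ^ 2 * (β / Nu) := by
      rw [hδ, mul_pow, Real.sq_sqrt hβNu.le]
    have h4 : ε ^ 2 ≤ ‖v‖ ^ 2 := by
      have := pow_le_pow_left₀ hε.le hθ 2
      simpa [hv] using this
    rw [h1, h3]
    calc ε ^ 2 * (β / Nu) ≤ ‖v‖ ^ 2 * (β / Nu) := by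
          exact mul_le_mul_of_nonneg_right h4 hβNu.le
      _ = β * (u ⬝ᵥ u) / Nu := by rw [h2]; ring
      _ ≤ _ := hj
  have hδd : δ ≤ ‖d‖ := by
    have := Real.sqrt_le_sqrt hdsq
    rwa [Real.sqrt_sq hδpos.le, Real.sqrt_sq (norm_nonneg d)] at this
  have hdpos : 0 < ‖d‖ := lt_of_lt_of_le hδpos hδd
  -- maximizer of ⟪d, ·⟫ on W
  have hcont : ContinuousOn (fun x : EuclideanSpace ℝ (Fin n) => ⟪d, x⟫) W :=
    (continuous_const.inner continuous_id).continuousOn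
  obtain ⟨w0, hw0W, hmax⟩ := hWcomp.exists_isMaxOn hWne hcont
  have hmax' : ∀ x ∈ W, ⟪d, x⟫ ≤ ⟪d, w0⟫ := fun x hx => hmax hx
  -- w0 is on the frontier
  have hw0f : w0 ∈ frontier W := by
    rw [frontier, hWcomp.isClosed.closure_eq]
    refine ⟨hw0W, fun hint => ?_⟩
    obtain ⟨r, hr, hball⟩ := Metric.mem_nhds_iff.mp (mem_interior_iff_mem_nhds.mp hint)
    set x := w0 + (r / 2 / ‖d‖) • d with hx
    have hxW : x ∈ W := by
      apply hball
      rw [Metric.mem_ball, dist_eq_norm]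
      have : x - w0 = (r / 2 / ‖d‖) • d := by rw [hx]; abel
      rw [this, norm_smul, Real.norm_eq_abs,
          abs_of_pos (div_pos (by linarith) hdpos),
          div_mul_cancel₀ _ (ne_of_gt hdpos)]
      linarith
    have hip : ⟪d, x⟫ = ⟪d, w0⟫ + (r / 2 / ‖d‖) * ‖d‖ ^ 2 := by
      rw [hx, inner_add_right, real_inner_smul_right, real_inner_self_eq_norm_sq]
    have : 0 < (r / 2 / ‖d‖) * ‖d‖ ^ 2 :=
      mul_pos (div_pos (by linarith) hdpos) (by positivity)
    have := hmax' x hxW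
    rw [hip] at this
    linarith
  -- the key inclusion
  have hsub : {ω | ‖w (t + j) ω - w0‖ < δ} ⊆ {ω | θ ∉ Δ (t + j + 1) ω} := by
    intro ω hω
    simp only [Set.mem_setOf_eq] at hω ⊢
    rw [hΔ (t + j) ω]
    simp only [Set.mem_setOf_eq, ← hv, ← hd]
    intro hmem
    have h1 := hmax' (d + w (t + j) ω) hmem
    rw [inner_add_right, real_inner_self_eq_norm_sq] at h1
    -- ⟪d, w ω - w0⟫ ≥ -‖d‖ * ‖w ω - w0‖
    have h2 : -(‖d‖ * ‖w (t + j) ω - w0‖) ≤ ⟪d, w (t + j) ω - w0⟫ := by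
      have := abs_real_inner_le_norm d (w (t + j) ω - w0)
      have := neg_abs_le ⟪d, w (t + j) ω - w0⟫
      linarith
    have h3 : ⟪d, w (t + j) ω - w0⟫ = ⟪d, w (t + j) ω⟫ - ⟪d, w0⟫ := inner_sub_right d _ _
    have h4 : ‖d‖ * ‖w (t + j) ω - w0‖ < ‖d‖ * δ :=
      mul_lt_mul_of_pos_left hω hdpos
    have h5 : ‖d‖ * δ ≤ ‖d‖ ^ 2 := by
      have := mul_le_mul_of_nonneg_left hδd (norm_nonneg d)
      nlinarith
    linarith
  refine ⟨t + j + 1, Finset.mem_Icc.mpr ⟨by omega, by omega⟩, ?_⟩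
  calc ENNReal.ofReal (pw δ) ≤ P {ω | ‖w (t + j) ω - w0‖ < δ} :=
        hpw w0 hw0f δ hδpos (t + j)
    _ ≤ P {ω | θ ∉ Δ (t + j + 1) ω} := measure_mono hsub
end

section
/- Let N_u ≥ 1 and let D_0, …, D_{N_u−1} ∈ ℝ^{n×p} satisfy ‖D_j‖ ≤ τ (operator norm) for all j and S := Σ_{j=0}^{N_u−1} D_jᵀ D_j ⪰ β·I with β > 0. Let m ∈ ℝ^p with ‖m‖ = 1, and define g_j := −D_j S^{−1} m ∈ ℝ^n for each j. Let W ⊆ ℝ^n and for each j let w_j⁰ ∈ W satisfy g_jᵀ(w − w_j⁰) ≤ 0 for all w ∈ W. If θ, θ* ∈ ℝ^p and w_0, …, w_{N_u−1} ∈ ℝ^n satisfy D_j(θ* − θ) + w_j ∈ W for all j ∈ {0, …, N_u−1}, then mᵀ(θ − θ*) ≤ (N_u·τ/β)·max_{j} ‖w_j − w_j⁰‖. -/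
open Matrix
open scoped RealInnerProductSpace

lemma teL_mul {a b c : ℕ} (A : Matrix (Fin a) (Fin b) ℝ) (B : Matrix (Fin b) (Fin c) ℝ)
    (x : EuclideanSpace ℝ (Fin c)) :
    toEuclideanLin (A * B) x = toEuclideanLin A (toEuclideanLin B x) := by
  simp [toEuclideanLin_apply, mulVec_mulVec]

lemma teL_psd {p : ℕ} (M : Matrix (Fin p) (Fin p) ℝ) (hM : M.PosSemidef)
    (u : EuclideanSpace ℝ (Fin p)) : 0 ≤ ⟪u, toEuclideanLin M u⟫ := by
  have := hM.re_dotProduct_nonneg ((WithLp.equiv 2 _) u)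
  simp [toEuclideanLin_apply, EuclideanSpace.inner_eq_star_dotProduct] at this ⊢
  rw [dotProduct_comm]; exact this

lemma teL_transpose_inner {a b : ℕ} (A : Matrix (Fin a) (Fin b) ℝ)
    (u : EuclideanSpace ℝ (Fin a)) (x : EuclideanSpace ℝ (Fin b)) :
    ⟪u, toEuclideanLin A x⟫ = ⟪toEuclideanLin Aᵀ u, x⟫ := by
  have hT : Aᵀ = Aᴴ := by
    ext i j; simp [Matrix.conjTranspose_apply]
  rw [hT, Matrix.toEuclideanLin_conjTranspose_eq_adjoint, LinearMap.adjoint_inner_left]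

lemma teL_transpose_inner' {a b : ℕ} (A : Matrix (Fin a) (Fin b) ℝ)
    (x : EuclideanSpace ℝ (Fin b)) (u : EuclideanSpace ℝ (Fin a)) :
    ⟪toEuclideanLin A x, u⟫ = ⟪x, toEuclideanLin Aᵀ u⟫ := by
  rw [teL_transpose_inner Aᵀ x u, Matrix.transpose_transpose]

lemma teL_one {a : ℕ} (u : EuclideanSpace ℝ (Fin a)) :
    toEuclideanLin (1 : Matrix (Fin a) (Fin a) ℝ) u = u := by
  rw [toEuclideanLin_apply, Matrix.one_mulVec]

/-- the key deterministic bound behind Theorem 3. If `S = Σⱼ Dⱼᵀ Dⱼ ⪰ βI`,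
`‖Dⱼ‖ ≤ τ`, `‖m‖ = 1`, `gⱼ = −Dⱼ S⁻¹ m` lies in the normal cone to `W` at `wⱼ⁰`, and
`Dⱼ(θ* − θ) + wⱼ ∈ W` for all `j < N_u`, then
`mᵀ(θ − θ*) ≤ (N_u τ/β)·maxⱼ ‖wⱼ − wⱼ⁰‖`. -/
theorem stmt6 (n p : ℕ) (hn : 1 ≤ n) (hp : 1 ≤ p) (Nu : ℕ) (hNu : 1 ≤ Nu)
    (D : ℕ → Matrix (Fin n) (Fin p) ℝ) (τ β : ℝ) (hβ : 0 < β)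
    (hDbdd : ∀ j < Nu, ∀ v : EuclideanSpace ℝ (Fin p), ‖toEuclideanLin (D j) v‖ ≤ τ * ‖v‖)
    (S : Matrix (Fin p) (Fin p) ℝ) (hS : S = ∑ j ∈ Finset.range Nu, (D j)ᵀ * D j)
    (hSβ : Matrix.PosSemidef (S - β • (1 : Matrix (Fin p) (Fin p) ℝ)))
    (m : EuclideanSpace ℝ (Fin p)) (hm : ‖m‖ = 1)
    (g : ℕ → EuclideanSpace ℝ (Fin n))
    (hg : ∀ j < Nu, g j = -(toEuclideanLin (D j) (toEuclideanLin S⁻¹ m)))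
    (W : Set (EuclideanSpace ℝ (Fin n))) (w0 : ℕ → EuclideanSpace ℝ (Fin n))
    (hw0W : ∀ j < Nu, w0 j ∈ W)
    (hcone : ∀ j < Nu, ∀ w ∈ W, ⟪g j, w - w0 j⟫ ≤ 0)
    (θ θs : EuclideanSpace ℝ (Fin p)) (w : ℕ → EuclideanSpace ℝ (Fin n))
    (hmem : ∀ j < Nu, toEuclideanLin (D j) (θs - θ) + w j ∈ W) :
    ⟪m, θ - θs⟫ ≤ (↑Nu * τ / β) *
      (Finset.range Nu).sup' (Finset.nonempty_range_iff.mpr (by omega))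
        (fun j => ‖w j - w0 j‖) := by
  -- S is positive definite, hence invertible
  have hSpd : S.PosDef := by
    have h1 : (β • (1 : Matrix (Fin p) (Fin p) ℝ)).PosDef := by
      have : (β • (1 : Matrix (Fin p) (Fin p) ℝ)) = Matrix.diagonal (fun _ => β) := by
        rw [smul_one_eq_diagonal]
      rw [this]
      exact Matrix.posDef_diagonal_iff.mpr fun _ => hβ
    have := Matrix.PosDef.posSemidef_add hSβ h1
    simpa using this
  have hSsymm : Sᵀ = S := by
    have := hSpd.isHermitian
    rw [← Matrix.conjTranspose_eq_transpose_of_trivial]; exact this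
  have hSinv' : S * S⁻¹ = 1 :=
    Matrix.mul_nonsing_inv S ((Matrix.isUnit_iff_isUnit_det S).mp hSpd.isUnit)
  set v : EuclideanSpace ℝ (Fin p) := toEuclideanLin S⁻¹ m with hv
  set x : EuclideanSpace ℝ (Fin p) := θs - θ with hx
  -- key identity: Σⱼ ⟪Dⱼ v, Dⱼ x⟫ = ⟪m, x⟫
  have hkey : ∑ j ∈ Finset.range Nu, ⟪toEuclideanLin (D j) v, toEuclideanLin (D j) x⟫ = ⟪m, x⟫ := by
    have h1 : ∀ j, ⟪toEuclideanLin (D j) v, toEuclideanLin (D j) x⟫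
        = ⟪v, toEuclideanLin ((D j)ᵀ * (D j)) x⟫ := by
      intro j
      rw [teL_mul, teL_transpose_inner']
    simp_rw [h1]
    have h2 : ∑ j ∈ Finset.range Nu, ⟪v, toEuclideanLin ((D j)ᵀ * (D j)) x⟫
        = ⟪v, toEuclideanLin S x⟫ := by
      rw [hS]
      rw [map_sum]
      rw [LinearMap.coe_sum, Finset.sum_apply, inner_sum]
    rw [h2, teL_transpose_inner, hSsymm, hv, ← teL_mul, hSinv', teL_one]
  -- norm bound on v: β ‖v‖² ≤ ⟪v, S v⟫ = ⟪v, m⟫ ≤ ‖v‖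
  have hvSv : ⟪v, toEuclideanLin S v⟫ = ⟪v, m⟫ := by
    rw [teL_transpose_inner, hSsymm, hv, ← teL_mul, hSinv', teL_one]
    exact real_inner_comm _ _
  have hvbound : ‖v‖ ≤ 1 / β := by
    have h1 : 0 ≤ ⟪v, toEuclideanLin (S - β • 1) v⟫ := teL_psd _ hSβ v
    have h2 : toEuclideanLin (S - β • (1 : Matrix (Fin p) (Fin p) ℝ)) v
        = toEuclideanLin S v - β • toEuclideanLin (1 : Matrix (Fin p) (Fin p) ℝ) v := by
      rw [map_sub, _root_.map_smul]; simp
    have h3 : (toEuclideanLin (1 : Matrix (Fin p) (Fin p) ℝ)) v = v := teL_one v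
    rw [h2, h3, inner_sub_right, inner_smul_right, hvSv] at h1
    have h4 : β * ‖v‖ ^ 2 ≤ ⟪v, m⟫ := by
      have : ⟪v, v⟫ = ‖v‖ ^ 2 := real_inner_self_eq_norm_sq v
      nlinarith [h1, this]
    have h5 : ⟪v, m⟫ ≤ ‖v‖ := by
      calc ⟪v, m⟫ ≤ ‖v‖ * ‖m‖ := real_inner_le_norm v m
        _ = ‖v‖ := by rw [hm, mul_one]
    rcases eq_or_lt_of_le (norm_nonneg v) with h0 | h0
    · rw [← h0]; positivity
    · rw [le_div_iff₀ hβ]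
      have key : (‖v‖ * β) * ‖v‖ ≤ 1 * ‖v‖ := by nlinarith [h4, h5]
      exact le_of_mul_le_mul_right key h0
  -- τ ≥ 0
  have hτ : 0 ≤ τ := by
    have h := hDbdd 0 hNu (EuclideanSpace.single ⟨0, hp⟩ 1)
    have hns : ‖(EuclideanSpace.single (⟨0, hp⟩ : Fin p) (1:ℝ))‖ = 1 := by
      simp [EuclideanSpace.norm_single]
    rw [hns, mul_one] at h
    exact le_trans (norm_nonneg _) h
  -- the max M
  set M := (Finset.range Nu).sup' (Finset.nonempty_range_iff.mpr (by omega))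
      (fun j => ‖w j - w0 j‖) with hM
  have hM0 : 0 ≤ M :=
    le_trans (norm_nonneg (w 0 - w0 0))
      (Finset.le_sup' (fun j => ‖w j - w0 j‖) (Finset.mem_range.mpr hNu))
  -- per-term bound: -⟪Dⱼ v, Dⱼ x⟫ ≤ (τ/β) * M
  have hterm : ∀ j ∈ Finset.range Nu,
      -⟪toEuclideanLin (D j) v, toEuclideanLin (D j) x⟫ ≤ (τ / β) * M := by
    intro j hj
    rw [Finset.mem_range] at hj
    have hco := hcone j hj _ (hmem j hj)
    rw [hg j hj] at hco
    have hco' : ⟪toEuclideanLin (D j) v, toEuclideanLin (D j) x + w j - w0 j⟫ ≥ 0 := by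
      have : ⟪-(toEuclideanLin (D j) v), toEuclideanLin (D j) x + w j - w0 j⟫ ≤ 0 := hco
      rw [inner_neg_left] at this
      linarith
    rw [show toEuclideanLin (D j) x + w j - w0 j
        = toEuclideanLin (D j) x + (w j - w0 j) by abel, inner_add_right] at hco'
    have h1 : -⟪toEuclideanLin (D j) v, toEuclideanLin (D j) x⟫
        ≤ ⟪toEuclideanLin (D j) v, w j - w0 j⟫ := by linarith
    have h2 : ⟪toEuclideanLin (D j) v, w j - w0 j⟫ ≤ ‖toEuclideanLin (D j) v‖ * ‖w j - w0 j‖ :=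
      real_inner_le_norm _ _
    have h3 : ‖toEuclideanLin (D j) v‖ ≤ τ / β := by
      calc ‖toEuclideanLin (D j) v‖ ≤ τ * ‖v‖ := hDbdd j hj v
        _ ≤ τ * (1 / β) := by exact mul_le_mul_of_nonneg_left hvbound hτ
        _ = τ / β := by ring
    have h4 : ‖w j - w0 j‖ ≤ M :=
      Finset.le_sup' (fun j => ‖w j - w0 j‖) (Finset.mem_range.mpr hj)
    calc -⟪toEuclideanLin (D j) v, toEuclideanLin (D j) x⟫
        ≤ ‖toEuclideanLin (D j) v‖ * ‖w j - w0 j‖ := le_trans h1 h2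
      _ ≤ (τ / β) * M := by
          apply mul_le_mul h3 h4 (norm_nonneg _)
          positivity
  -- conclude
  have hsum : -⟪m, x⟫ ≤ (↑Nu : ℝ) * ((τ / β) * M) := by
    rw [← hkey, ← Finset.sum_neg_distrib]
    calc ∑ j ∈ Finset.range Nu, -⟪toEuclideanLin (D j) v, toEuclideanLin (D j) x⟫
        ≤ ∑ j ∈ Finset.range Nu, (τ / β) * M := Finset.sum_le_sum hterm
      _ = (↑Nu : ℝ) * ((τ / β) * M) := by
          rw [Finset.sum_const, Finset.card_range, nsmul_eq_mul]
  have hfl : ⟪m, θ - θs⟫ = -⟪m, x⟫ := by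
    rw [hx, show θ - θs = -(θs - θ) by abel, inner_neg_right]
  rw [hfl]
  calc -⟪m, x⟫ ≤ (↑Nu : ℝ) * ((τ / β) * M) := hsum
    _ = (↑Nu * τ / β) * M := by ring
end
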